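/- Let T be a finite loopless digraph and let < be a bipartite Min-Max ordering of B(T) that is proper, i.e., for every pair of distinct vertices x, y of T, x' < y' holds if and only if x'' < y''. Then the relation ≺ on the vertices of T defined by x ≺ y iff x' < y' is a linear ordering of V(T) and is a Min-Max ordering of T. -/

import Mathlib

/-- If `(f, g)` is a proper bipartite Min-Max ordering of `B(T)`, then the
relation `x ≺ y ↔ f x < f y` is a strict linear (total) order on `V(T)` and is a Min-Max
ordering of `T`. -/
theorem stmt_8 {V : Type} [Fintype V] (A : V → V → Prop)
    (hirr : ∀ v, ¬ A v v)
    (f g : V → ℕ) (hf : Function.Injective f) (hg : Function.Injective g)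
    (hmm : ∀ i j s r : V, f i < f j → g s < g r → A i r → A j s → A i s ∧ A j r)
    (hproper : ∀ x y : V, x ≠ y → (f x < f y ↔ g x < g y)) :
    IsStrictTotalOrder V (fun x y => f x < f y) ∧
    (∀ i j s r : V, f i < f j → f s < f r → A i r → A j s → A i s ∧ A j r) := by
  constructor
  · refine { trichotomous := ?_, irrefl := fun a => lt_irrefl _, trans := fun a b c => lt_trans }
    intro x y h1 h2
    rcases lt_trichotomy (f x) (f y) with h|h|h
    · exact absurd h h1
    · exact hf h
    · exact absurd h h2
  · intro i j s r hij hsr hir hjs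
    have hsne : s ≠ r := fun h => by subst h; exact lt_irrefl _ hsr
    exact hmm i j s r hij ((hproper s r hsne).mp hsr) hir hjs
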